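/- Adversarial sampling-probability bound: let X be a set of n distinct points in ℝ^d, let K ≥ 1, ε1 > 0 and ε2 ≥ 1, fix C* and a* as in the optimal-clustering setup, and let x ∈ X be a point that is not an ε2-outlier and whose optimal cluster P_x satisfies |P_x| ≥ 2 and |P_x| ≥ n/(K·ε1). Then for every nonempty finite C ⊆ ℝ^d with |C| ≤ K, n·d(x,C)² ≤ 20·K·ε1·ε2·φ(X;C). (Consequently, the D²-sampling probability of x at any step of K-means++ initialization on X is at most 20·K·ε1·ε2/n.) -/
import Mathlib


open scoped BigOperators Classical

noncomputable section

abbrev Pt (d : ℕ) := EuclideanSpace ℝ (Fin d)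

variable {d : ℕ}

/-- Distance from a point to a finite set of centroids (`0` if the set is empty). -/
def dSet (x : Pt d) (C : Finset (Pt d)) : ℝ :=
  if h : C.Nonempty then C.inf' h fun c => dist x c else 0

/-- `K`-means cost of a multiset of points w.r.t. a finite centroid set. -/
def kcost (X : Multiset (Pt d)) (C : Finset (Pt d)) : ℝ :=
  (X.map fun x => dSet x C ^ 2).sum

/-- Optimal `K`-means objective. -/
def optCost (K : ℕ) (X : Multiset (Pt d)) : ℝ :=
  sInf {v | ∃ C : Finset (Pt d), C.Nonempty ∧ C.card ≤ K ∧ v = kcost X C}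

/-- Set of entries of the tuple `c` with index `< j`. -/
def prefSet {K : ℕ} (c : Fin K → Pt d) (j : Fin K) : Finset (Pt d) :=
  (Finset.univ.filter fun i => i < j).image c

/-- Probability of picking `c j` as the `j`-th centroid in K-means++ initialization on `X`,
given that the previous centroids are the entries of `c` with index `< j`. -/
def stepProb (X : Multiset (Pt d)) {K : ℕ} (c : Fin K → Pt d) (j : Fin K) : ℝ :=
  if (j : ℕ) = 0 then (X.count (c j) : ℝ) / (Multiset.card X : ℝ)
  else (X.count (c j) : ℝ) * dSet (c j) (prefSet c j) ^ 2 / kcost X (prefSet c j)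

/-- PMF of K-means++ initialization with parameter `K` on the multiset `X`,
as a function on `K`-tuples of points. -/
def kmppProb (X : Multiset (Pt d)) {K : ℕ} (c : Fin K → Pt d) : ℝ :=
  ∏ j : Fin K, stepProb X c j

/-- Tuples with all entries in the finite set `X`. -/
def tupleSupp (X : Finset (Pt d)) (K : ℕ) : Finset (Fin K → Pt d) :=
  Fintype.piFinset fun _ => X

/-- The nearest centroid among the entries of `c` to `x`, ties broken by smallest index
(junk value `x` when `K = 0`). -/
def assignPt {K : ℕ} (c : Fin K → Pt d) (x : Pt d) : Pt d :=
  if h : (Finset.univ.filter fun j : Fin K => ∀ i, dist x (c j) ≤ dist x (c i)).Nonempty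
  then c ((Finset.univ.filter fun j : Fin K => ∀ i, dist x (c j) ≤ dist x (c i)).min' h)
  else x


lemma dSet_nonneg (x : Pt d) (C : Finset (Pt d)) : 0 ≤ dSet x C := by
  unfold dSet
  split_ifs with h
  · exact Finset.le_inf' h _ fun c _ => dist_nonneg
  · exact le_refl 0

lemma dSet_le_dist (x : Pt d) {C : Finset (Pt d)} {c : Pt d} (hc : c ∈ C) :
    dSet x C ≤ dist x c := by
  unfold dSet
  rw [dif_pos ⟨c, hc⟩]
  exact Finset.inf'_le _ hc

lemma exists_dSet (x : Pt d) {C : Finset (Pt d)} (h : C.Nonempty) :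
    ∃ c ∈ C, dSet x C = dist x c := by
  obtain ⟨c, hc, hceq⟩ := Finset.exists_mem_eq_inf' h (fun c => dist x c)
  exact ⟨c, hc, by unfold dSet; rw [dif_pos h]; exact hceq⟩

lemma dSet_triangle (x y : Pt d) {C : Finset (Pt d)} (h : C.Nonempty) :
    dSet x C ≤ dist x y + dSet y C := by
  obtain ⟨c, hc, hceq⟩ := exists_dSet y h
  calc dSet x C ≤ dist x c := dSet_le_dist x hc
    _ ≤ dist x y + dist y c := dist_triangle x y c
    _ = dist x y + dSet y C := by rw [hceq]

lemma sq_add_bound {u v w : ℝ} (hu : 0 ≤ u) (hv : 0 ≤ v) (hw : 0 ≤ w) (huv : u ≤ v + w) :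
    u ^ 2 ≤ 2 * v ^ 2 + 2 * w ^ 2 := by
  nlinarith [sq_nonneg (v - w), sq_nonneg (v + w)]

lemma kcost_eq_sum (X : Finset (Pt d)) (C : Finset (Pt d)) :
    kcost X.val C = ∑ y ∈ X, dSet y C ^ 2 := rfl

lemma kcost_nonneg (X : Multiset (Pt d)) (C : Finset (Pt d)) : 0 ≤ kcost X C := by
  apply Multiset.sum_nonneg
  intro a ha
  obtain ⟨y, _, rfl⟩ := Multiset.mem_map.1 ha
  positivity

/-- adversarial sampling-probability bound.  If `x ∈ X` is not an
`ε2`-outlier and its optimal cluster `P_x` satisfies `|P_x| ≥ 2` and `|P_x| ≥ n/(K ε1)`,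
then for every nonempty finite `C` with `|C| ≤ K`,
`n · d(x,C)² ≤ 20 K ε1 ε2 · φ(X;C)`. -/
theorem adversarial_sampling_bound {d K : ℕ} (hK : 1 ≤ K)
    (X : Finset (Pt d)) (ε1 ε2 : ℝ) (hε1 : 0 < ε1) (hε2 : 1 ≤ ε2)
    (Cstar : Finset (Pt d)) (hCne : Cstar.Nonempty) (hCcard : Cstar.card ≤ K)
    (hCopt : kcost X.val Cstar = optCost K X.val)
    (astar : Pt d → Pt d)
    (hastar : ∀ y ∈ X, astar y ∈ Cstar ∧ dist y (astar y) = dSet y Cstar)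
    (x : Pt d) (hx : x ∈ X)
    (hout : dist x (astar x) ^ 2 * ((X.filter fun y => astar y = astar x).card : ℝ)
      ≤ ε2 * ∑ y ∈ X.filter (fun y => astar y = astar x), dist y (astar x) ^ 2)
    (hP2 : 2 ≤ (X.filter fun y => astar y = astar x).card)
    (hP1 : (X.card : ℝ) / (K * ε1) ≤ ((X.filter fun y => astar y = astar x).card : ℝ)) :
    ∀ C : Finset (Pt d), C.Nonempty → C.card ≤ K →
      (X.card : ℝ) * dSet x C ^ 2 ≤ 20 * K * ε1 * ε2 * kcost X.val C := by
  intro C hCne' hCcard'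
  set P := X.filter (fun y => astar y = astar x) with hPdef
  have hxP : x ∈ P := Finset.mem_filter.2 ⟨hx, rfl⟩
  set a := astar x with hadef
  set Sa := ∑ y ∈ P, dist y a ^ 2 with hSadef
  set Sc := ∑ y ∈ P, dSet y C ^ 2 with hScdef
  set φ := kcost X.val C with hφdef
  -- optimality
  have hφ0 : 0 ≤ φ := kcost_nonneg _ _
  have hopt_le : kcost X.val Cstar ≤ φ := by
    rw [hCopt]
    apply csInf_le
    · refine ⟨0, ?_⟩
      rintro v ⟨D, -, -, rfl⟩
      exact kcost_nonneg _ _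
    · exact ⟨C, hCne', hCcard', rfl⟩
  -- Sa ≤ φ
  have hSa_le : Sa ≤ φ := by
    have h1 : Sa = ∑ y ∈ P, dSet y Cstar ^ 2 := by
      apply Finset.sum_congr rfl
      intro y hy
      obtain ⟨hyX, hya⟩ := Finset.mem_filter.1 hy
      rw [hadef, ← hya, (hastar y hyX).2]
    have h2 : ∑ y ∈ P, dSet y Cstar ^ 2 ≤ ∑ y ∈ X, dSet y Cstar ^ 2 := by
      apply Finset.sum_le_sum_of_subset_of_nonneg (Finset.filter_subset _ _)
      intro y _ _; positivity
    rw [h1]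
    calc ∑ y ∈ P, dSet y Cstar ^ 2 ≤ ∑ y ∈ X, dSet y Cstar ^ 2 := h2
      _ = kcost X.val Cstar := (kcost_eq_sum X Cstar).symm
      _ ≤ φ := hopt_le
  have hSc_le : Sc ≤ φ := by
    rw [hφdef, kcost_eq_sum]
    apply Finset.sum_le_sum_of_subset_of_nonneg (Finset.filter_subset _ _)
    intro y _ _; positivity
  -- averaging bound on dSet a C
  have hsum1 : (P.card : ℝ) * dSet a C ^ 2 ≤ 2 * Sa + 2 * Sc := by
    have key1 : ∀ y ∈ P, dSet a C ^ 2 ≤ 2 * dist y a ^ 2 + 2 * dSet y C ^ 2 := by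
      intro y hy
      apply sq_add_bound (dSet_nonneg a C) dist_nonneg (dSet_nonneg y C)
      calc dSet a C ≤ dist a y + dSet y C := dSet_triangle a y hCne'
        _ = dist y a + dSet y C := by rw [dist_comm]
    calc (P.card : ℝ) * dSet a C ^ 2 = ∑ _y ∈ P, dSet a C ^ 2 := by
          rw [Finset.sum_const, nsmul_eq_mul]
      _ ≤ ∑ y ∈ P, (2 * dist y a ^ 2 + 2 * dSet y C ^ 2) := Finset.sum_le_sum key1
      _ = 2 * Sa + 2 * Sc := by rw [Finset.sum_add_distrib, ← Finset.mul_sum, ← Finset.mul_sum]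
  have key2 : dSet x C ^ 2 ≤ 2 * dist x a ^ 2 + 2 * dSet a C ^ 2 :=
    sq_add_bound (dSet_nonneg x C) dist_nonneg (dSet_nonneg a C) (dSet_triangle x a hCne')
  have hm : (2 : ℝ) ≤ (P.card : ℝ) := by exact_mod_cast hP2
  have hKε1 : (0 : ℝ) < (K : ℝ) * ε1 := by
    have : (1 : ℝ) ≤ (K : ℝ) := by exact_mod_cast hK
    nlinarith
  have hn : (X.card : ℝ) ≤ (P.card : ℝ) * ((K : ℝ) * ε1) := by
    have := (div_le_iff₀ hKε1).mp hP1
    linarith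
  have step1 : (P.card : ℝ) * dSet x C ^ 2 ≤ 10 * ε2 * φ := by
    have h1 : (P.card : ℝ) * dSet x C ^ 2 ≤
        (P.card : ℝ) * (2 * dist x a ^ 2 + 2 * dSet a C ^ 2) := by
      apply mul_le_mul_of_nonneg_left key2 (by linarith)
    nlinarith [mul_le_mul_of_nonneg_left hSa_le (by linarith : (0:ℝ) ≤ ε2),
      mul_nonneg (by linarith : (0:ℝ) ≤ ε2 - 1) hφ0]
  have hsq : (0 : ℝ) ≤ dSet x C ^ 2 := sq_nonneg _
  calc (X.card : ℝ) * dSet x C ^ 2 ≤ (P.card : ℝ) * ((K : ℝ) * ε1) * dSet x C ^ 2 :=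
        mul_le_mul_of_nonneg_right hn hsq
    _ = (K : ℝ) * ε1 * ((P.card : ℝ) * dSet x C ^ 2) := by ring
    _ ≤ (K : ℝ) * ε1 * (10 * ε2 * φ) := mul_le_mul_of_nonneg_left step1 (le_of_lt hKε1)
    _ ≤ 20 * K * ε1 * ε2 * φ := by nlinarith [mul_nonneg (mul_nonneg (le_of_lt hKε1) (by linarith : (0:ℝ) ≤ ε2)) hφ0]
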